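/- arXiv:2503.12859 — 3 statements merged into one kernel-verified Lean document; each statement's English description precedes it below -/
import Mathlib

section
/- Let G be an n×n real matrix with positive definite symmetric part, Q := −G⁻¹, S := (Q+Qᵀ)/2, and γ := det(2G)/det(G+Gᵀ). Let ρ(l) := (2π)⁻ⁿ det(G)⁻¹ ∫_{[0,2π)ⁿ} exp( Σ_{i,j} Q_{ij} √(l_i l_j) e^{𝕚(θ_i−θ_j)} ) dθ be the density formula with kernel G, and let ρ̄(l) := (2π)⁻ⁿ det((−S)⁻¹)⁻¹ ∫_{[0,2π)ⁿ} exp( Σ_{i,j} S_{ij} √(l_i l_j) e^{𝕚(θ_i−θ_j)} ) dθ be the density formula with the symmetric kernel (−S)⁻¹. Then for every l ∈ ℝ₊ⁿ, |ρ(l)| ≤ γ · ρ̄(l). -/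
open Matrix MeasureTheory

lemma quad_transpose {n : ℕ} (M : Matrix (Fin n) (Fin n) ℝ) (x : Fin n → ℝ) :
    x ⬝ᵥ Mᵀ.mulVec x = x ⬝ᵥ M.mulVec x := by
  rw [Matrix.mulVec_transpose, dotProduct_comm, Matrix.dotProduct_mulVec]

lemma det_pos_of_pd {n : ℕ} (G : Matrix (Fin n) (Fin n) ℝ)
    (hpd : ∀ x : Fin n → ℝ, x ≠ 0 → 0 < x ⬝ᵥ G.mulVec x) : 0 < G.det := by
  set M : ℝ → Matrix (Fin n) (Fin n) ℝ :=
    fun t => (1/2 : ℝ) • (G + Gᵀ) + t • ((1/2 : ℝ) • (G - Gᵀ)) with hM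
  have hquad : ∀ t (x : Fin n → ℝ), x ⬝ᵥ (M t).mulVec x = x ⬝ᵥ G.mulVec x := by
    intro t x
    simp only [hM, Matrix.add_mulVec, Matrix.smul_mulVec, Matrix.sub_mulVec,
      dotProduct_add, dotProduct_smul, dotProduct_sub, smul_eq_mul, quad_transpose]
    ring
  have hne : ∀ t, (M t).det ≠ 0 := by
    intro t h
    obtain ⟨v, hv, hv0⟩ := (Matrix.exists_mulVec_eq_zero_iff).2 h
    have := hpd v hv
    rw [← hquad t v, hv0, dotProduct_zero] at this
    exact lt_irrefl _ this
  have hM1 : M 1 = G := by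
    ext i j
    simp [hM, Matrix.add_apply, Matrix.smul_apply, Matrix.sub_apply, Matrix.transpose_apply]
    ring
  have hherm : (M 0).IsHermitian := by
    ext i j
    simp [hM, Matrix.conjTranspose_apply, Matrix.add_apply, Matrix.smul_apply,
      Matrix.transpose_apply]
    ring
  have hposdef : (M 0).PosDef := by
    refine Matrix.PosDef.of_dotProduct_mulVec_pos hherm fun x hx => ?_
    have := hpd x hx
    rw [← hquad 0 x] at this
    simpa using this
  have h0 : 0 < (M 0).det := hposdef.det_pos
  have hcont : Continuous fun t => (M t).det := by
    apply Continuous.matrix_det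
    fun_prop
  rcases lt_trichotomy G.det 0 with h | h | h
  · exfalso
    have hmem : (0 : ℝ) ∈ Set.Icc ((M 1).det) ((M 0).det) := by
      constructor
      · rw [hM1]; exact h.le
      · exact h0.le
    obtain ⟨t, _, ht⟩ := intermediate_value_Icc' (by norm_num : (0:ℝ) ≤ 1)
      hcont.continuousOn hmem
    exact hne t ht
  · exact absurd h (by rw [← hM1]; exact hne 1)
  · exact h

lemma sym_sum_eq_re {n : ℕ} (Q : Matrix (Fin n) (Fin n) ℝ) (l : Fin n → ℝ) (θ : Fin n → ℝ) :
    (∑ i, ∑ j, ((((Q i j + Q j i) / 2 : ℝ)) : ℂ) * ((Real.sqrt (l i * l j) : ℝ) : ℂ) *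
        Complex.exp (Complex.I * (((θ i : ℝ) : ℂ) - ((θ j : ℝ) : ℂ)))) =
      (((∑ i, ∑ j, ((Q i j : ℝ) : ℂ) * ((Real.sqrt (l i * l j) : ℝ) : ℂ) *
        Complex.exp (Complex.I * (((θ i : ℝ) : ℂ) - ((θ j : ℝ) : ℂ)))).re : ℝ) : ℂ) := by
  set z : ℂ := ∑ i, ∑ j, ((Q i j : ℝ) : ℂ) * ((Real.sqrt (l i * l j) : ℝ) : ℂ) *
        Complex.exp (Complex.I * (((θ i : ℝ) : ℂ) - ((θ j : ℝ) : ℂ))) with hz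
  have hconj : (starRingEnd ℂ) z = ∑ i, ∑ j, ((Q j i : ℝ) : ℂ) *
      ((Real.sqrt (l i * l j) : ℝ) : ℂ) *
      Complex.exp (Complex.I * (((θ i : ℝ) : ℂ) - ((θ j : ℝ) : ℂ))) := by
    rw [hz, map_sum, Finset.sum_comm]
    refine Finset.sum_congr rfl fun i _ => ?_
    rw [map_sum]
    refine Finset.sum_congr rfl fun j _ => ?_
    rw [_root_.map_mul, _root_.map_mul, ← Complex.exp_conj, _root_.map_mul, map_sub,
      Complex.conj_ofReal, Complex.conj_ofReal, Complex.conj_ofReal, Complex.conj_I,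
      mul_comm (l j) (l i)]
    ring_nf
    rw [Complex.conj_ofReal]
  have key : (∑ i, ∑ j, ((((Q i j + Q j i) / 2 : ℝ)) : ℂ) *
      ((Real.sqrt (l i * l j) : ℝ) : ℂ) *
      Complex.exp (Complex.I * (((θ i : ℝ) : ℂ) - ((θ j : ℝ) : ℂ)))) =
      (1 / 2 : ℂ) * (z + (starRingEnd ℂ) z) := by
    rw [hconj, hz, ← Finset.sum_add_distrib, Finset.mul_sum]
    refine Finset.sum_congr rfl fun i _ => ?_
    rw [← Finset.sum_add_distrib, Finset.mul_sum]
    refine Finset.sum_congr rfl fun j _ => ?_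
    push_cast
    ring
  rw [key, Complex.add_conj]
  push_cast
  ring


/-- The density formula for a 1-permanental vector with kernel `G`, where `Q = −G⁻¹`.
Note that for the symmetric kernel `(−S)⁻¹` (with `S = (Q+Qᵀ)/2`), `−((−S)⁻¹)⁻¹ = S` and
`det((−S)⁻¹)⁻¹ = det(−S)`, so `permDensity ((−S)⁻¹)` coincides with the formula `ρ̄` of the
statement. -/
noncomputable def permDensity {n : ℕ} (G : Matrix (Fin n) (Fin n) ℝ) (l : Fin n → ℝ) : ℂ :=
  (((2 * Real.pi)⁻¹ : ℝ) ^ n : ℝ) * ((G.det⁻¹ : ℝ) : ℂ) *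
    ∫ θ : Fin n → ℝ in Set.univ.pi fun _ : Fin n => Set.Ico (0 : ℝ) (2 * Real.pi),
      Complex.exp (∑ i, ∑ j, ((-(G⁻¹ i j) : ℝ) : ℂ) * ((Real.sqrt (l i * l j) : ℝ) : ℂ) *
        Complex.exp (Complex.I * (((θ i : ℝ) : ℂ) - ((θ j : ℝ) : ℂ))))

/-- **Symmetrization bound.** Let `G` have positive definite symmetric part,
`Q := −G⁻¹`, `S := (Q+Qᵀ)/2`, `γ := det(2G)/det(G+Gᵀ)`. Let `ρ` be the density formula with
kernel `G` and `ρ̄` the density formula with the symmetric kernel `(−S)⁻¹`. Then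
`|ρ(l)| ≤ γ·ρ̄(l)` for every `l ∈ ℝ₊ⁿ`. -/
theorem permDensity_symmetrization_bound {n : ℕ} (G : Matrix (Fin n) (Fin n) ℝ)
    (hpd : ∀ x : Fin n → ℝ, x ≠ 0 → 0 < x ⬝ᵥ G.mulVec x)
    (S : Matrix (Fin n) (Fin n) ℝ)
    (hS : S = (1 / 2 : ℝ) • ((-G⁻¹) + (-G⁻¹)ᵀ)) :
    ∀ l : Fin n → ℝ, (∀ i, 0 ≤ l i) →
      ‖permDensity G l‖ ≤
        (((2 : ℝ) • G).det / (G + Gᵀ).det) * (permDensity (-S)⁻¹ l).re := by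
  intro l _
  have hdG : 0 < G.det := det_pos_of_pd G hpd
  have hGu : IsUnit G.det := isUnit_iff_ne_zero.2 hdG.ne'
  -- positivity of det (G + Gᵀ)
  have hGGt : (G + Gᵀ).PosDef := by
    refine Matrix.PosDef.of_dotProduct_mulVec_pos ?_ fun x hx => ?_
    · ext i j
      simp [Matrix.conjTranspose_apply, Matrix.add_apply, Matrix.transpose_apply]
      ring
    · have h1 := hpd x hx
      have h2 : x ⬝ᵥ (G + Gᵀ).mulVec x = 2 * (x ⬝ᵥ G.mulVec x) := by
        simp only [Matrix.add_mulVec, dotProduct_add, quad_transpose]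
        ring
      simp only [star_trivial]
      rw [h2]
      positivity
  have hdGGt : 0 < (G + Gᵀ).det := hGGt.det_pos
  -- the matrix -S and its determinant
  have hmulform : G⁻¹ * (G + Gᵀ) * Gᵀ⁻¹ = G⁻¹ + Gᵀ⁻¹ := by
    rw [Matrix.mul_add, Matrix.add_mul]
    rw [Matrix.nonsing_inv_mul G hGu]
    rw [Matrix.mul_assoc, Matrix.mul_nonsing_inv Gᵀ (by rwa [Matrix.det_transpose])]
    rw [Matrix.one_mul, Matrix.mul_one]
    exact add_comm _ _
  have hnegS : -S = (1/2 : ℝ) • (G⁻¹ * (G + Gᵀ) * Gᵀ⁻¹) := by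
    rw [hS, Matrix.transpose_neg, Matrix.transpose_nonsing_inv, hmulform, ← neg_add,
      smul_neg, neg_neg]
  have hdetnegS : (-S).det = (1/2 : ℝ)^n * (G.det⁻¹ * ((G + Gᵀ).det * G.det⁻¹)) := by
    rw [hnegS, Matrix.det_smul, Matrix.det_mul, Matrix.det_mul,
      Matrix.det_nonsing_inv, Matrix.det_nonsing_inv, Matrix.det_transpose,
      Ring.inverse_eq_inv', Fintype.card_fin]
    ring
  have hdnegS : 0 < (-S).det := by
    rw [hdetnegS]; positivity
  have hSu : IsUnit (-S).det := isUnit_iff_ne_zero.2 hdnegS.ne'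
  have hinvinv : ((-S)⁻¹)⁻¹ = -S := Matrix.nonsing_inv_nonsing_inv _ hSu
  have hdetinv : ((-S)⁻¹).det = (-S).det⁻¹ := by
    rw [Matrix.det_nonsing_inv, Ring.inverse_eq_inv']
  -- the integrands
  set box := Set.univ.pi fun _ : Fin n => Set.Ico (0 : ℝ) (2 * Real.pi) with hbox
  set f : (Fin n → ℝ) → ℂ := fun θ =>
      Complex.exp (∑ i, ∑ j, ((-(G⁻¹ i j) : ℝ) : ℂ) * ((Real.sqrt (l i * l j) : ℝ) : ℂ) *
        Complex.exp (Complex.I * (((θ i : ℝ) : ℂ) - ((θ j : ℝ) : ℂ)))) with hf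
  have hpoint : ∀ θ : Fin n → ℝ,
      Complex.exp (∑ i, ∑ j, ((-(((-S)⁻¹)⁻¹ i j) : ℝ) : ℂ) *
        ((Real.sqrt (l i * l j) : ℝ) : ℂ) *
        Complex.exp (Complex.I * (((θ i : ℝ) : ℂ) - ((θ j : ℝ) : ℂ)))) =
      ((‖f θ‖ : ℝ) : ℂ) := by
    intro θ
    have hSij : ∀ i j, (-(((-S)⁻¹)⁻¹ i j) : ℝ) =
        (((-G⁻¹) i j + (-G⁻¹) j i) / 2 : ℝ) := by
      intro i j
      rw [hinvinv]
      simp only [Matrix.neg_apply, neg_neg]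
      rw [hS]
      simp [Matrix.smul_apply, Matrix.add_apply, Matrix.neg_apply, Matrix.transpose_apply]
      ring
    calc Complex.exp (∑ i, ∑ j, ((-(((-S)⁻¹)⁻¹ i j) : ℝ) : ℂ) *
          ((Real.sqrt (l i * l j) : ℝ) : ℂ) *
          Complex.exp (Complex.I * (((θ i : ℝ) : ℂ) - ((θ j : ℝ) : ℂ))))
        = Complex.exp (∑ i, ∑ j, (((((-G⁻¹) i j + (-G⁻¹) j i) / 2 : ℝ)) : ℂ) *
          ((Real.sqrt (l i * l j) : ℝ) : ℂ) *
          Complex.exp (Complex.I * (((θ i : ℝ) : ℂ) - ((θ j : ℝ) : ℂ)))) := by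
          congr 1
          refine Finset.sum_congr rfl fun i _ => Finset.sum_congr rfl fun j _ => ?_
          rw [hSij]
      _ = ((‖f θ‖ : ℝ) : ℂ) := by
          rw [sym_sum_eq_re (-G⁻¹) l θ, hf]
          simp only [Matrix.neg_apply]
          rw [← Complex.ofReal_exp, Complex.norm_exp]
  -- the symmetric density is real
  set r : ℝ := ∫ θ in box, ‖f θ‖ with hr
  have hrnn : 0 ≤ r := by
    apply integral_nonneg
    intro θ
    exact norm_nonneg _
  have hsymInt : (∫ θ in box,
      Complex.exp (∑ i, ∑ j, ((-(((-S)⁻¹)⁻¹ i j) : ℝ) : ℂ) *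
        ((Real.sqrt (l i * l j) : ℝ) : ℂ) *
        Complex.exp (Complex.I * (((θ i : ℝ) : ℂ) - ((θ j : ℝ) : ℂ))))) = ((r : ℝ) : ℂ) := by
    calc (∫ θ in box,
        Complex.exp (∑ i, ∑ j, ((-(((-S)⁻¹)⁻¹ i j) : ℝ) : ℂ) *
          ((Real.sqrt (l i * l j) : ℝ) : ℂ) *
          Complex.exp (Complex.I * (((θ i : ℝ) : ℂ) - ((θ j : ℝ) : ℂ)))))
        = ∫ θ in box, ((‖f θ‖ : ℝ) : ℂ) :=
          integral_congr_ae (Filter.Eventually.of_forall fun θ => hpoint θ)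
      _ = ((r : ℝ) : ℂ) := integral_ofReal
  have hRHS0 : permDensity (-S)⁻¹ l =
      ((((2 * Real.pi)⁻¹ : ℝ) ^ n * ((-S).det * r) : ℝ) : ℂ) := by
    rw [permDensity, hsymInt, hdetinv, inv_inv]
    push_cast
    ring
  have hRHS : (permDensity (-S)⁻¹ l).re =
      ((2 * Real.pi)⁻¹ : ℝ) ^ n * ((-S).det * r) := by
    rw [hRHS0, Complex.ofReal_re]
  -- bound the left side
  have hLHS : ‖permDensity G l‖ ≤
      ((2 * Real.pi)⁻¹ : ℝ) ^ n * (G.det⁻¹ * r) := by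
    rw [permDensity]
    rw [norm_mul, norm_mul, Complex.norm_real, Complex.norm_real, Real.norm_eq_abs, Real.norm_eq_abs]
    have h2pi : 0 ≤ ((2 * Real.pi)⁻¹ : ℝ) ^ n := by positivity
    rw [abs_of_nonneg h2pi, abs_of_nonneg (by positivity : (0:ℝ) ≤ G.det⁻¹)]
    rw [mul_assoc]
    apply mul_le_mul_of_nonneg_left _ h2pi
    apply mul_le_mul_of_nonneg_left _ (by positivity : (0:ℝ) ≤ G.det⁻¹)
    show ‖∫ θ in box, f θ‖ ≤ r
    have := MeasureTheory.norm_integral_le_integral_norm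
      (μ := volume.restrict box) (fun θ => f θ)
    simpa only [hr] using this
  -- scalar identity
  have hscal : (((2 : ℝ) • G).det / (G + Gᵀ).det) * (-S).det = G.det⁻¹ := by
    rw [Matrix.det_smul, hdetnegS, Fintype.card_fin]
    field_simp
    rw [← mul_pow]; norm_num
  rw [hRHS]
  calc ‖permDensity G l‖ ≤ ((2 * Real.pi)⁻¹ : ℝ) ^ n * (G.det⁻¹ * r) := hLHS
    _ = (((2 : ℝ) • G).det / (G + Gᵀ).det) *
        (((2 * Real.pi)⁻¹ : ℝ) ^ n * ((-S).det * r)) := by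
        rw [← hscal]; ring
end

section
/- Let G be an n×n real matrix with positive definite symmetric part, i.e. xᵀGx > 0 for every nonzero x ∈ ℝⁿ. Then det( (G+Gᵀ)/2 ) ≤ det(G) (the Ostrowski–Taussky inequality); equivalently, γ := det(2G)/det(G+Gᵀ) satisfies γ ≥ 1. -/
open Matrix

/-- det(1+Q) ≥ 1 for PSD Q over ℝ. -/
lemma det_one_add_posSemidef {m : ℕ} {Q : Matrix (Fin m) (Fin m) ℝ}
    (hQ : Q.PosSemidef) : 1 ≤ (1 + Q).det := by
  set U : Matrix (Fin m) (Fin m) ℝ := (hQ.1.eigenvectorUnitary : Matrix (Fin m) (Fin m) ℝ)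
    with hUdef
  set D : Matrix (Fin m) (Fin m) ℝ := diagonal (RCLike.ofReal ∘ hQ.1.eigenvalues) with hDdef
  have hU : U * star U = 1 := (Matrix.mem_unitaryGroup_iff).mp hQ.1.eigenvectorUnitary.2
  have h1 : (1 : Matrix (Fin m) (Fin m) ℝ) + Q = U * (1 + D) * star U := by
    rw [mul_add, add_mul, mul_one, hU]
    congr 1
    exact hQ.1.spectral_theorem
  have hdetU : U.det * (star U).det = 1 := by
    rw [← det_mul, hU, det_one]
  have hdiag : (1 : ℝ) ≤ (1 + D).det := by
    have h2 : (1 : Matrix (Fin m) (Fin m) ℝ) + D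
        = diagonal (fun i => 1 + hQ.1.eigenvalues i) := by
      rw [hDdef, ← diagonal_one, diagonal_add]
      rfl
    rw [h2, det_diagonal]
    calc (1:ℝ) = ∏ _i : Fin m, (1:ℝ) := by simp
    _ ≤ ∏ i, (1 + hQ.1.eigenvalues i) := by
        apply Finset.prod_le_prod
        · intro i _; norm_num
        · intro i _; have := hQ.eigenvalues_nonneg i; linarith
  calc (1:ℝ) ≤ (1 + D).det := hdiag
  _ = (1 + Q).det := by
      rw [h1, det_mul, det_mul]
      linear_combination -(1 + D).det * hdetU

/-- A real matrix with positive definite symmetric part has positive determinant. -/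
lemma det_pos_of_pd_part {m : ℕ} {M : Matrix (Fin m) (Fin m) ℝ}
    (h : ∀ x : Fin m → ℝ, x ≠ 0 → 0 < x ⬝ᵥ M.mulVec x) : 0 < M.det := by
  set f : ℝ → ℝ := fun t => ((1 - t) • (1 : Matrix (Fin m) (Fin m) ℝ) + t • M).det with hf
  have hcont : Continuous f := by
    apply Continuous.matrix_det
    fun_prop
  have hne : ∀ t ∈ Set.Icc (0:ℝ) 1, f t ≠ 0 := by
    rintro t ⟨ht0, ht1⟩ hzero
    obtain ⟨v, hv, hMv⟩ := (Matrix.exists_mulVec_eq_zero_iff).mpr hzero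
    have hq : v ⬝ᵥ ((1 - t) • (1 : Matrix (Fin m) (Fin m) ℝ) + t • M).mulVec v = 0 := by
      rw [hMv, dotProduct_zero]
    rw [add_mulVec, smul_mulVec, smul_mulVec, one_mulVec, dotProduct_add,
      dotProduct_smul, dotProduct_smul] at hq
    have hvv : 0 < v ⬝ᵥ v := by
      have := dotProduct_star_self_pos_iff (v := v) (R := ℝ)
      simpa using this.mpr hv
    simp only [smul_eq_mul] at hq
    rcases eq_or_lt_of_le ht0 with rfl | ht0'
    · simp only [sub_zero, one_mul, zero_mul, add_zero] at hq; linarith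
    · have h1 : 0 < t * (v ⬝ᵥ M.mulVec v) := mul_pos ht0' (h v hv)
      have h2 : 0 ≤ (1 - t) * (v ⬝ᵥ v) := mul_nonneg (by linarith) hvv.le
      linarith
  by_contra hle
  push_neg at hle
  have hf0 : f 0 = 1 := by simp [hf]
  have hf1 : f 1 = M.det := by simp [hf]
  have hmem : (0:ℝ) ∈ Set.Icc (f 1) (f 0) := by
    rw [hf0, hf1]; exact ⟨hle, zero_le_one⟩
  obtain ⟨t, ht, hft⟩ := intermediate_value_Icc' (by norm_num : (0:ℝ) ≤ 1)
    hcont.continuousOn hmem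
  exact hne t ht hft

/-- **Ostrowski–Taussky inequality.** If `G` has positive definite symmetric part
(`xᵀGx > 0` for every nonzero `x`), then `det((G+Gᵀ)/2) ≤ det(G)`; equivalently
`γ := det(2G)/det(G+Gᵀ) ≥ 1`. -/
theorem ostrowski_taussky {n : ℕ} (G : Matrix (Fin n) (Fin n) ℝ)
    (hpd : ∀ x : Fin n → ℝ, x ≠ 0 → 0 < x ⬝ᵥ G.mulVec x) :
    ((1 / 2 : ℝ) • (G + Gᵀ)).det ≤ G.det ∧
    1 ≤ ((2 : ℝ) • G).det / (G + Gᵀ).det := by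
  set S : Matrix (Fin n) (Fin n) ℝ := (1 / 2 : ℝ) • (G + Gᵀ) with hS
  have hquad : ∀ x : Fin n → ℝ, x ⬝ᵥ Gᵀ.mulVec x = x ⬝ᵥ G.mulVec x := by
    intro x
    rw [mulVec_transpose, dotProduct_comm, ← dotProduct_mulVec]
  have hStr : Sᵀ = S := by
    rw [hS, transpose_smul, transpose_add, transpose_transpose, add_comm]
  have hSpd : S.PosDef := by
    rw [posDef_iff_dotProduct_mulVec]
    constructor
    · rw [IsHermitian, conjTranspose_eq_transpose_of_trivial, hStr]
    · intro x hx
      have hxe : (star x) ⬝ᵥ S.mulVec x = (1/2) * (x ⬝ᵥ G.mulVec x + x ⬝ᵥ Gᵀ.mulVec x) := by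
        simp only [hS, smul_mulVec, add_mulVec, dotProduct_smul, dotProduct_add,
          star_trivial, smul_eq_mul]
      rw [hxe, hquad]
      have := hpd x hx
      linarith
  have hGGt : G + Gᵀ = (2:ℝ) • S := by
    rw [hS, smul_smul]; norm_num
  clear_value S
  clear hS
  have hSdet : 0 < S.det := hSpd.det_pos
  have hGdet : 0 < G.det := det_pos_of_pd_part hpd
  haveI : Invertible S := hSpd.isUnit.invertible
  have hGt : Gᵀ = (2:ℝ) • S - G := eq_sub_of_add_eq' hGGt
  set P : Matrix (Fin n) (Fin n) ℝ := (G - S)ᵀ * S⁻¹ * (G - S) with hP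
  have h1 : (G - S)ᵀ = S - G := by
    rw [transpose_sub, hStr, hGt, two_smul]; abel
  have hkey : G * S⁻¹ * Gᵀ = S + P := by
    rw [hP, h1, hGt, two_smul]
    simp only [Matrix.mul_sub, Matrix.sub_mul, Matrix.mul_add, Matrix.add_mul,
      Matrix.inv_mul_cancel_right_of_invertible, Matrix.mul_inv_of_invertible, Matrix.one_mul]
    abel
  have hPpsd : P.PosSemidef := by
    have h2 := (hSpd.inv.posSemidef).conjTranspose_mul_mul_same (G - S)
    rwa [conjTranspose_eq_transpose_of_trivial] at h2
  obtain ⟨T, hTT, hTsym⟩ : ∃ T : Matrix (Fin n) (Fin n) ℝ, T * T = S ∧ T.IsHermitian := by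
    open scoped MatrixOrder in
    exact ⟨CFC.sqrt S, CFC.sqrt_mul_sqrt_self S hSpd.posSemidef.nonneg,
      (CFC.sqrt_nonneg S).posSemidef.1⟩
  have hTdet : T.det * T.det = S.det := by rw [← det_mul, hTT]
  have hTunit : IsUnit T.det := by
    rcases eq_or_ne T.det 0 with h0 | h0
    · rw [h0, mul_zero] at hTdet; exact absurd hTdet hSdet.ne
    · exact h0.isUnit
  haveI : Invertible T := ((Matrix.isUnit_iff_isUnit_det T).mpr hTunit).invertible
  have hTi : (T⁻¹)ᵀ = T⁻¹ := by
    rw [← conjTranspose_eq_transpose_of_trivial]; exact hTsym.inv.eq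
  set Q : Matrix (Fin n) (Fin n) ℝ := T⁻¹ * P * T⁻¹ with hQ
  have hQpsd : Q.PosSemidef := by
    have h3 := hPpsd.conjTranspose_mul_mul_same T⁻¹
    rwa [conjTranspose_eq_transpose_of_trivial, hTi] at h3
  have hSP : S + P = T * (1 + Q) * T := by
    rw [hQ, Matrix.mul_add, Matrix.add_mul, Matrix.mul_one, hTT]
    congr 1
    rw [← Matrix.mul_assoc, ← Matrix.mul_assoc, Matrix.mul_inv_of_invertible, Matrix.one_mul,
      Matrix.mul_assoc, Matrix.inv_mul_of_invertible, Matrix.mul_one]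
  have hSPdet : S.det ≤ (S + P).det := by
    have h4 : (S + P).det = S.det * (1 + Q).det := by
      rw [hSP, det_mul, det_mul, ← hTdet]; ring
    rw [h4]
    nlinarith [det_one_add_posSemidef hQpsd]
  have h5 : (S + P).det = G.det * S.det⁻¹ * G.det := by
    rw [← hkey, det_mul, det_mul, det_transpose, det_nonsing_inv, Ring.inverse_eq_inv]
  have hmain : S.det ≤ G.det := by
    rw [h5] at hSPdet
    have h6 : S.det * S.det ≤ G.det * G.det := by
      have := mul_le_mul_of_nonneg_left hSPdet hSdet.le
      have h7 : S.det * (G.det * S.det⁻¹ * G.det) = G.det * G.det := by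
        field_simp
      linarith [h7 ▸ this]
    nlinarith
  refine ⟨hmain, ?_⟩
  have hd1 : ((2:ℝ) • G).det = 2^n * G.det := by
    rw [det_smul]; simp
  have hd2 : (G + Gᵀ).det = 2^n * S.det := by
    rw [hGGt, det_smul]; simp
  rw [hd1, hd2, mul_div_mul_left _ _ (by positivity : (2:ℝ)^n ≠ 0)]
  exact (one_le_div hSdet).mpr hmain
end

section
/- Let G be an n×n real matrix (n ≥ 2) with positive definite symmetric part, set Q := −G⁻¹, and write Q in block form with scalar block Q₁₁, column Q_{*1} ∈ ℝⁿ⁻¹, row Q_{1*} ∈ ℝⁿ⁻¹, and (n−1)×(n−1) block Q_{**} (indices 2,…,n). Then Q_{**} is invertible with det(−Q_{**}) > 0, G₁₁ = det(G)·det(−Q_{**}) > 0, and for every r > 0 and every (l₂,…,lₙ) ∈ ℝ₊ⁿ⁻¹, the density formula ρ with kernel G satisfies G₁₁ · exp(r/G₁₁) · ρ(r, l₂, …, lₙ) = (2π)^{−(n−1)} det(−Q_{**}) ∫_{[0,2π)^{n−1}} exp( ⟨ φ_* + √r·Q_{**}^{−T}Q_{1*} , Q_{**}( φ̄_* + √r·Q_{**}^{−1}Q_{*1}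 ) ⟩ ) dθ₂⋯dθₙ, where φ_{*,i} := √(l_i)·e^{𝕚θ_i} for i = 2,…,n, φ̄_* is its componentwise complex conjugate, and ⟨x,y⟩ := Σᵢ xᵢyᵢ is the bilinear (unconjugated) pairing on ℂⁿ⁻¹. -/
open Matrix MeasureTheory
open Set


variable {n : ℕ}

lemma dotProduct_self_pos' {v : Fin n → ℝ} (hv : v ≠ 0) : 0 < v ⬝ᵥ v := by
  have h1 : (0:ℝ) ≤ v ⬝ᵥ v := Finset.sum_nonneg fun i _ => mul_self_nonneg _
  rcases h1.lt_or_eq with h | h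
  · exact h
  · exfalso
    apply hv
    funext i
    have := Finset.sum_eq_zero_iff_of_nonneg (fun i _ => mul_self_nonneg (v i)) |>.1 h.symm i
      (Finset.mem_univ i)
    have := mul_self_eq_zero.1 this
    simpa using this

lemma pd_det_pos (M : Matrix (Fin n) (Fin n) ℝ)
    (h : ∀ x : Fin n → ℝ, x ≠ 0 → 0 < x ⬝ᵥ M.mulVec x) : 0 < M.det := by
  set f : ℝ → ℝ := fun t => ((1 - t) • (1 : Matrix (Fin n) (Fin n) ℝ) + t • M).det with hf
  have hcont : Continuous f := by
    apply Continuous.matrix_det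
    exact ((continuous_const.sub continuous_id).smul continuous_const).add
      (continuous_id.smul continuous_const)
  have hne : ∀ t ∈ Icc (0:ℝ) 1, f t ≠ 0 := by
    intro t ht h0
    obtain ⟨v, hv, hv0⟩ := Matrix.exists_mulVec_eq_zero_iff.2 h0
    have hdot : v ⬝ᵥ ((1 - t) • (1 : Matrix (Fin n) (Fin n) ℝ) + t • M).mulVec v = 0 := by
      rw [hv0, dotProduct_zero]
    rw [Matrix.add_mulVec, Matrix.smul_mulVec, Matrix.smul_mulVec,
      Matrix.one_mulVec, dotProduct_add, dotProduct_smul, dotProduct_smul,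
      smul_eq_mul, smul_eq_mul] at hdot
    have h1 : 0 < (1 - t) * (v ⬝ᵥ v) + t * (v ⬝ᵥ M.mulVec v) := by
      rcases eq_or_lt_of_le ht.1 with h2 | h2
      · rw [← h2]; simpa using dotProduct_self_pos' hv
      · have ha : 0 ≤ (1 - t) * (v ⬝ᵥ v) :=
          mul_nonneg (by linarith [ht.2]) (dotProduct_self_pos' hv).le
        have hb : 0 < t * (v ⬝ᵥ M.mulVec v) := mul_pos h2 (h v hv)
        linarith
    linarith [hdot, h1]
  have hf0 : f 0 = 1 := by simp [hf]
  have hf1 : f 1 = M.det := by simp [hf]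
  by_contra hle
  push_neg at hle
  have hMne : M.det ≠ 0 := by
    have := hne 1 (by norm_num); rwa [hf1] at this
  have hMlt : M.det < 0 := lt_of_le_of_ne hle hMne
  have := intermediate_value_Icc' (by norm_num : (0:ℝ) ≤ 1) hcont.continuousOn
  have h0mem : (0:ℝ) ∈ Icc (f 1) (f 0) := by rw [hf0, hf1]; exact ⟨hMlt.le, by norm_num⟩
  obtain ⟨t, ht, hft⟩ := this h0mem
  exact hne t ht hft

lemma pd_isUnit_det (M : Matrix (Fin n) (Fin n) ℝ)
    (h : ∀ x : Fin n → ℝ, x ≠ 0 → 0 < x ⬝ᵥ M.mulVec x) : IsUnit M.det :=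
  isUnit_iff_ne_zero.2 (pd_det_pos M h).ne'

lemma pd_inv (M : Matrix (Fin n) (Fin n) ℝ)
    (h : ∀ x : Fin n → ℝ, x ≠ 0 → 0 < x ⬝ᵥ M.mulVec x) :
    ∀ x : Fin n → ℝ, x ≠ 0 → 0 < x ⬝ᵥ M⁻¹.mulVec x := by
  intro x hx
  have hu := pd_isUnit_det M h
  set y := M⁻¹.mulVec x with hy
  have hxy : M.mulVec y = x := by
    rw [hy, Matrix.mulVec_mulVec, Matrix.mul_nonsing_inv _ hu, Matrix.one_mulVec]
  have hyne : y ≠ 0 := by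
    intro h0
    apply hx
    rw [← hxy, h0, Matrix.mulVec_zero]
  calc (0:ℝ) < y ⬝ᵥ M.mulVec y := h y hyne
  _ = (M.mulVec y) ⬝ᵥ y := by
      rw [dotProduct_comm]
  _ = x ⬝ᵥ M⁻¹.mulVec x := by rw [hxy, hy]

variable {m : ℕ}

/-- block equivalence -/
def blockEquiv (m : ℕ) : Fin 1 ⊕ Fin m ≃ Fin (m + 1) where
  toFun := Sum.elim (fun _ => 0) Fin.succ
  invFun := Fin.cases (Sum.inl 0) Sum.inr
  left_inv := by rintro (x | j)
                 · simp [Subsingleton.elim x 0]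
                 · simp
  right_inv := by
    intro i
    induction i using Fin.cases <;> simp

lemma blockFacts (M : Matrix (Fin (m + 1)) (Fin (m + 1)) ℝ)
    (hM : IsUnit M.det)
    (hMss : IsUnit (Matrix.of fun i j : Fin m => M i.succ j.succ).det) :
    M.det = (Matrix.of fun i j : Fin m => M i.succ j.succ).det *
        (M 0 0 - (fun j => M 0 j.succ) ⬝ᵥ
          ((Matrix.of fun i j : Fin m => M i.succ j.succ)⁻¹.mulVec fun i => M i.succ 0)) ∧
      M⁻¹ 0 0 * (M 0 0 - (fun j => M 0 j.succ) ⬝ᵥ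
          ((Matrix.of fun i j : Fin m => M i.succ j.succ)⁻¹.mulVec fun i => M i.succ 0)) = 1 := by
  classical
  set D : Matrix (Fin m) (Fin m) ℝ := Matrix.of fun i j : Fin m => M i.succ j.succ with hD
  set A : Matrix (Fin 1) (Fin 1) ℝ := Matrix.of fun _ _ => M 0 0 with hA
  set B : Matrix (Fin 1) (Fin m) ℝ := Matrix.of fun _ j => M 0 j.succ with hB
  set C : Matrix (Fin m) (Fin 1) ℝ := Matrix.of fun i _ => M i.succ 0 with hC
  haveI : Invertible D := D.invertibleOfIsUnitDet hMss
  set e := blockEquiv m with he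
  have hN : M.submatrix e e = fromBlocks A B C D := by
    ext i j
    rcases i with x | i <;> rcases j with y | j <;> rfl
  -- Schur scalar
  set δ : ℝ := M 0 0 - (fun j => M 0 j.succ) ⬝ᵥ (D⁻¹.mulVec fun i => M i.succ 0) with hδ
  have hschur : (A - B * ⅟D * C) = Matrix.of fun _ _ : Fin 1 => δ := by
    ext i j
    have h1 : (B * D⁻¹ * C) i j = (fun j => M 0 j.succ) ⬝ᵥ (D⁻¹.mulVec fun i => M i.succ 0) := by
      simp only [Matrix.mul_apply, Matrix.mulVec, dotProduct, Finset.mul_sum, Finset.sum_mul,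
        mul_assoc]
      exact Finset.sum_comm
    rw [invOf_eq_nonsing_inv]
    simp [Matrix.sub_apply, h1, hδ, hA]
  have hdet : M.det = D.det * δ := by
    have h1 : (M.submatrix e e).det = M.det := Matrix.det_submatrix_equiv_self e M
    rw [← h1, hN, Matrix.det_fromBlocks₂₂, hschur]
    congr 1
    simp [Matrix.det_fin_one]
  constructor
  · exact hdet
  · -- invertibility of schur complement
    have hδne : δ ≠ 0 := by
      intro h0
      rw [h0, mul_zero] at hdet
      exact hM.ne_zero hdet
    haveI hSinv : Invertible (A - B * ⅟D * C) := by
      rw [hschur]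
      apply Matrix.invertibleOfIsUnitDet
      simpa [Matrix.det_fin_one] using isUnit_iff_ne_zero.2 hδne
    haveI hNinv : Invertible (fromBlocks A B C D) := Matrix.fromBlocks₂₂Invertible A B C D
    have hNinvof : ⅟(fromBlocks A B C D) = fromBlocks
        (⅟(A - B * ⅟D * C)) (-(⅟(A - B * ⅟D * C) * B * ⅟D))
        (-(⅟D * C * ⅟(A - B * ⅟D * C))) (⅟D + ⅟D * C * ⅟(A - B * ⅟D * C) * B * ⅟D) :=
      Matrix.invOf_fromBlocks₂₂_eq A B C D
    -- M⁻¹ 0 0 equals the (inl 0, inl 0) entry of ⅟(fromBlocks ...)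
    have hMinv : M⁻¹.submatrix e e = ⅟(fromBlocks A B C D) := by
      rw [invOf_eq_nonsing_inv, ← hN, Matrix.inv_submatrix_equiv]
    have h00 : M⁻¹ 0 0 = (⅟(A - B * ⅟D * C)) 0 0 := by
      have := congrFun (congrFun hMinv (Sum.inl 0)) (Sum.inl 0)
      rw [hNinvof] at this
      simpa [Matrix.submatrix_apply, he, blockEquiv, fromBlocks] using this
    have hSentry : (⅟(A - B * ⅟D * C)) 0 0 * δ = 1 := by
      have hS00 : (A - B * ⅟D * C) 0 0 = δ := by rw [hschur]; rfl
      have h2 : (⅟(A - B * ⅟D * C)) 0 0 * (A - B * ⅟D * C) 0 0 = 1 := by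
        simpa [Matrix.mul_apply, Fin.sum_univ_one] using
          congrFun (congrFun (invOf_mul_self (A - B * ⅟D * C)) 0) 0
      rwa [hS00] at h2
    rw [h00]
    exact hSentry

instance fact_two_pi_pos : Fact (0 < 2 * Real.pi) := ⟨by positivity⟩

lemma pi_restrict {k : ℕ} (s : Fin k → Set ℝ) (hs : ∀ i, MeasurableSet (s i)) :
    (volume : Measure (Fin k → ℝ)).restrict (Set.univ.pi s) =
      Measure.pi (fun i => volume.restrict (s i)) := by
  refine (Measure.pi_eq fun t ht => ?_).symm
  rw [Measure.restrict_apply (MeasurableSet.univ_pi ht), ← Set.pi_inter_distrib]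
  rw [volume_pi, Measure.pi_pi]
  exact Finset.prod_congr rfl fun i _ => (Measure.restrict_apply (ht i)).symm

lemma torus_integral {k : ℕ} (F : (Fin k → AddCircle (2 * Real.pi)) → ℂ)
    (hF : Continuous F) :
    ∫ y in Set.univ.pi (fun _ : Fin k => Set.Ico (0:ℝ) (2 * Real.pi)),
        F (fun i => ((y i : ℝ) : AddCircle (2 * Real.pi)))
      = ∫ z, F z ∂(Measure.pi fun _ : Fin k => (volume : Measure (AddCircle (2 * Real.pi)))) := by
  have h1 : (volume : Measure (Fin k → ℝ)).restrict (univ.pi fun _ => Ico 0 (2*Real.pi)) =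
      Measure.pi (fun _ : Fin k => volume.restrict (Ioc (0:ℝ) (0 + 2*Real.pi))) := by
    rw [pi_restrict _ (fun _ => measurableSet_Ico)]
    congr 1
    funext i
    rw [zero_add, Measure.restrict_congr_set Ico_ae_eq_Ioc]
  have hmp : MeasurePreserving (fun (y : Fin k → ℝ) (i : Fin k) => ((y i : AddCircle (2*Real.pi))))
      (Measure.pi fun _ : Fin k => volume.restrict (Ioc (0:ℝ) (0 + 2*Real.pi)))
      (Measure.pi fun _ : Fin k => (volume : Measure (AddCircle (2*Real.pi)))) :=
    measurePreserving_pi _ _ (fun _ => AddCircle.measurePreserving_mk _ 0)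
  rw [show (∫ y in Set.univ.pi (fun _ : Fin k => Set.Ico (0:ℝ) (2 * Real.pi)),
      F (fun i => ((y i : ℝ) : AddCircle (2 * Real.pi)))) =
      ∫ y, F (fun i => ((y i : ℝ) : AddCircle (2 * Real.pi)))
        ∂((volume : Measure (Fin k → ℝ)).restrict (univ.pi fun _ => Ico 0 (2*Real.pi))) from rfl,
    h1, ← hmp.map_eq,
    integral_map hmp.measurable.aemeasurable hF.aestronglyMeasurable]

lemma torus_shift {k : ℕ} (H : (Fin k → AddCircle (2 * Real.pi)) → ℂ) (hH : Continuous H) (c : ℝ) :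
    ∫ y in Set.univ.pi (fun _ : Fin k => Set.Ico (0:ℝ) (2 * Real.pi)),
        H (fun i => ((y i + c : ℝ) : AddCircle (2 * Real.pi)))
      = ∫ y in Set.univ.pi (fun _ : Fin k => Set.Ico (0:ℝ) (2 * Real.pi)),
        H (fun i => ((y i : ℝ) : AddCircle (2 * Real.pi))) := by
  have hcont : Continuous (fun z : Fin k → AddCircle (2 * Real.pi) =>
      H (fun i => z i + ((c : ℝ) : AddCircle (2 * Real.pi)))) := by
    apply hH.comp
    exact continuous_pi fun i => (continuous_apply i).add continuous_const
  have h2 : ∀ y : Fin k → ℝ, (fun i => ((y i + c : ℝ) : AddCircle (2 * Real.pi))) =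
      fun i => (((y i : ℝ) : AddCircle (2 * Real.pi)) + ((c : ℝ) : AddCircle (2 * Real.pi))) := by
    intro y; funext i; push_cast; rfl
  calc ∫ y in Set.univ.pi (fun _ : Fin k => Set.Ico (0:ℝ) (2 * Real.pi)),
        H (fun i => ((y i + c : ℝ) : AddCircle (2 * Real.pi)))
      = ∫ y in Set.univ.pi (fun _ : Fin k => Set.Ico (0:ℝ) (2 * Real.pi)),
        (fun z : Fin k → AddCircle (2 * Real.pi) =>
          H (fun i => z i + ((c : ℝ) : AddCircle (2 * Real.pi))))
          (fun i => ((y i : ℝ) : AddCircle (2 * Real.pi))) := by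
        apply setIntegral_congr_fun (MeasurableSet.univ_pi fun _ => measurableSet_Ico)
        intro y _
        simp only [h2 y]
    _ = ∫ z, H (fun i => z i + ((c : ℝ) : AddCircle (2 * Real.pi)))
          ∂(Measure.pi fun _ : Fin k => (volume : Measure (AddCircle (2 * Real.pi)))) :=
        torus_integral _ hcont
    _ = ∫ z, H z ∂(Measure.pi fun _ : Fin k => (volume : Measure (AddCircle (2 * Real.pi)))) := by
        have := integral_add_right_eq_self
          (μ := Measure.pi fun _ : Fin k => (volume : Measure (AddCircle (2 * Real.pi))))
          H (fun _ => ((c : ℝ) : AddCircle (2 * Real.pi)))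
        exact this
    _ = _ := (torus_integral H hH).symm

lemma key_exponent {m : ℕ} (Qf : Matrix (Fin (m+1)) (Fin (m+1)) ℝ)
    (r : ℝ) (hr : 0 ≤ r) (ls : Fin m → ℝ) (hls : ∀ i, 0 ≤ ls i)
    (Qss : Matrix (Fin m) (Fin m) ℝ) (hQss : ∀ i j, Qss i j = Qf i.succ j.succ)
    (hQssu : IsUnit Qss.det) (x : ℝ) (y : Fin m → ℝ) :
    Complex.exp (∑ i, ∑ j, ((Qf i j : ℝ) : ℂ) *
        ((Real.sqrt ((Fin.cons r ls : Fin (m+1) → ℝ) i * (Fin.cons r ls : Fin (m+1) → ℝ) j) : ℝ) : ℂ) *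
        Complex.exp (Complex.I *
          (((Fin.cons x (fun k => y k + x) : Fin (m+1) → ℝ) i : ℂ) -
           ((Fin.cons x (fun k => y k + x) : Fin (m+1) → ℝ) j : ℂ))))
      = Complex.exp (-(((r * ((fun j => Qf 0 j.succ) ⬝ᵥ Qss⁻¹.mulVec (fun i => Qf i.succ 0)) -
            r * Qf 0 0 : ℝ)) : ℂ)) *
        Complex.exp (∑ i,
          (((Real.sqrt (ls i) : ℝ) : ℂ) * Complex.exp (Complex.I * ((y i : ℝ) : ℂ)) +
              ((Real.sqrt r * ((Qss⁻¹)ᵀ.mulVec (fun j => Qf 0 j.succ) i) : ℝ) : ℂ)) *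
          ∑ j, ((Qss i j : ℝ) : ℂ) *
            (((Real.sqrt (ls j) : ℝ) : ℂ) * Complex.exp (-(Complex.I * ((y j : ℝ) : ℂ))) +
              ((Real.sqrt r * (Qss⁻¹.mulVec (fun i => Qf i.succ 0) j) : ℝ) : ℂ))) := by
  rw [← Complex.exp_add]
  congr 1
  set Q1s : Fin m → ℝ := fun j => Qf 0 j.succ with hQ1s
  set Qs1 : Fin m → ℝ := fun i => Qf i.succ 0 with hQs1
  set a : Fin m → ℂ := fun i => ((Real.sqrt (ls i) : ℝ) : ℂ) *
    Complex.exp (Complex.I * ((y i : ℝ) : ℂ)) with ha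
  set b : Fin m → ℂ := fun j => ((Real.sqrt (ls j) : ℝ) : ℂ) *
    Complex.exp (-(Complex.I * ((y j : ℝ) : ℂ))) with hb
  set w : Fin m → ℝ := (Qss⁻¹)ᵀ.mulVec Q1s with hw
  set v : Fin m → ℝ := Qss⁻¹.mulVec Qs1 with hv
  -- real matrix identities
  have hQv : Qss.mulVec v = Qs1 := by
    rw [hv, Matrix.mulVec_mulVec, Matrix.mul_nonsing_inv _ hQssu, Matrix.one_mulVec]
  have hwQ : w ᵥ* Qss = Q1s := by
    rw [hw, Matrix.mulVec_transpose, Matrix.vecMul_vecMul,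
      Matrix.nonsing_inv_mul _ hQssu, Matrix.vecMul_one]
  have hwv : w ⬝ᵥ Qs1 = Q1s ⬝ᵥ v := by
    rw [hw, hv, Matrix.mulVec_transpose]
    exact (Matrix.dotProduct_mulVec Q1s Qss⁻¹ Qs1).symm
  -- canonical form pieces
  set S : Fin m → ℂ := fun i => ∑ j, ((Qss i j : ℝ) : ℂ) * b j with hS
  -- LHS
  have hLHS : (∑ i, ∑ j, ((Qf i j : ℝ) : ℂ) *
        ((Real.sqrt ((Fin.cons r ls : Fin (m+1) → ℝ) i * (Fin.cons r ls : Fin (m+1) → ℝ) j) : ℝ) : ℂ) *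
        Complex.exp (Complex.I *
          (((Fin.cons x (fun k => y k + x) : Fin (m+1) → ℝ) i : ℂ) -
           ((Fin.cons x (fun k => y k + x) : Fin (m+1) → ℝ) j : ℂ))))
      = ((r * Qf 0 0 : ℝ) : ℂ) + ((∑ j, ((Real.sqrt r * Q1s j : ℝ) : ℂ) * b j) +
          ((∑ i, a i * ((Real.sqrt r * Qs1 i : ℝ) : ℂ)) +
            ∑ i, ∑ j, a i * (((Qss i j : ℝ) : ℂ) * b j))) := by
    simp only [Fin.sum_univ_succ, Fin.cons_zero, Fin.cons_succ]
    rw [Finset.sum_add_distrib]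
    have e1 : ((Qf 0 0 : ℝ) : ℂ) * ((Real.sqrt (r * r) : ℝ) : ℂ) *
        Complex.exp (Complex.I * (((x:ℝ):ℂ) - ((x:ℝ):ℂ))) = ((r * Qf 0 0 : ℝ) : ℂ) := by
      rw [Real.sqrt_mul_self hr, sub_self, mul_zero, Complex.exp_zero]
      push_cast; ring
    have e2 : (∑ j, ((Qf 0 j.succ : ℝ) : ℂ) * ((Real.sqrt (r * ls j) : ℝ) : ℂ) *
        Complex.exp (Complex.I * (((x:ℝ):ℂ) - ((y j + x : ℝ):ℂ))))
        = ∑ j, ((Real.sqrt r * Q1s j : ℝ) : ℂ) * b j := by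
      refine Finset.sum_congr rfl fun j _ => ?_
      rw [Real.sqrt_mul hr, hb]
      rw [show Complex.I * (((x:ℝ):ℂ) - ((y j + x : ℝ):ℂ)) = -(Complex.I * ((y j : ℝ):ℂ)) by
        push_cast; ring]
      push_cast [hQ1s]; ring
    have e3 : (∑ i, ((Qf i.succ 0 : ℝ) : ℂ) * ((Real.sqrt (ls i * r) : ℝ) : ℂ) *
        Complex.exp (Complex.I * (((y i + x : ℝ):ℂ) - ((x:ℝ):ℂ))))
        = ∑ i, a i * ((Real.sqrt r * Qs1 i : ℝ) : ℂ) := by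
      refine Finset.sum_congr rfl fun i _ => ?_
      rw [Real.sqrt_mul (hls i), ha]
      rw [show Complex.I * (((y i + x : ℝ):ℂ) - ((x:ℝ):ℂ)) = Complex.I * ((y i : ℝ):ℂ) by
        push_cast; ring]
      push_cast [hQs1]; ring
    have e4 : (∑ i, ∑ j, ((Qf i.succ j.succ : ℝ) : ℂ) * ((Real.sqrt (ls i * ls j) : ℝ) : ℂ) *
        Complex.exp (Complex.I * (((y i + x : ℝ):ℂ) - ((y j + x : ℝ):ℂ))))
        = ∑ i, ∑ j, a i * (((Qss i j : ℝ) : ℂ) * b j) := by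
      refine Finset.sum_congr rfl fun i _ => Finset.sum_congr rfl fun j _ => ?_
      rw [← hQss i j, Real.sqrt_mul (hls i), ha, hb]
      rw [show Complex.I * (((y i + x : ℝ):ℂ) - ((y j + x : ℝ):ℂ))
          = Complex.I * ((y i : ℝ):ℂ) + -(Complex.I * ((y j : ℝ):ℂ)) by push_cast; ring]
      rw [Complex.exp_add]
      push_cast; ring
    rw [e1, e2, e3, e4]
    ring
  rw [hLHS]
  -- RHS
  have hinner : ∀ i, (∑ j, ((Qss i j : ℝ) : ℂ) *
      (b j + ((Real.sqrt r * v j : ℝ) : ℂ))) = S i + ((Real.sqrt r * Qs1 i : ℝ) : ℂ) := by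
    intro i
    have h0 : (∑ j, ((Qss i j : ℝ) : ℂ) * (b j + ((Real.sqrt r * v j : ℝ) : ℂ)))
        = (∑ j, ((Qss i j : ℝ) : ℂ) * b j) +
          ∑ j, ((Qss i j : ℝ) : ℂ) * ((Real.sqrt r * v j : ℝ) : ℂ) := by
      rw [← Finset.sum_add_distrib]
      exact Finset.sum_congr rfl fun j _ => by ring
    rw [h0, hS]
    congr 1
    have h1 : (∑ j, ((Qss i j : ℝ) : ℂ) * ((Real.sqrt r * v j : ℝ) : ℂ))
        = ((∑ j, Qss i j * (Real.sqrt r * v j) : ℝ) : ℂ) := by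
      push_cast; rfl
    rw [h1]
    congr 1
    have h2 : ∑ j, Qss i j * (Real.sqrt r * v j) = Real.sqrt r * ∑ j, Qss i j * v j := by
      rw [Finset.mul_sum]
      exact Finset.sum_congr rfl fun j _ => by ring
    rw [h2]
    congr 1
    exact congrFun hQv i
  have hRHS : (∑ i, (a i + ((Real.sqrt r * w i : ℝ) : ℂ)) *
        ∑ j, ((Qss i j : ℝ) : ℂ) * (b j + ((Real.sqrt r * v j : ℝ) : ℂ)))
      = ((r * (Q1s ⬝ᵥ v) : ℝ) : ℂ) + ((∑ j, ((Real.sqrt r * Q1s j : ℝ) : ℂ) * b j) +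
          ((∑ i, a i * ((Real.sqrt r * Qs1 i : ℝ) : ℂ)) +
            ∑ i, ∑ j, a i * (((Qss i j : ℝ) : ℂ) * b j))) := by
    have hmulsum : ∀ i, a i * S i = ∑ j, a i * (((Qss i j : ℝ) : ℂ) * b j) := fun i => by
      rw [hS, Finset.mul_sum]
    have h0 : (∑ i, (a i + ((Real.sqrt r * w i : ℝ) : ℂ)) *
        ∑ j, ((Qss i j : ℝ) : ℂ) * (b j + ((Real.sqrt r * v j : ℝ) : ℂ)))
        = ∑ i, (((∑ j, a i * (((Qss i j : ℝ) : ℂ) * b j)) +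
              a i * ((Real.sqrt r * Qs1 i : ℝ) : ℂ)) +
            (((Real.sqrt r * w i : ℝ) : ℂ) * S i +
             ((Real.sqrt r * w i : ℝ) : ℂ) * ((Real.sqrt r * Qs1 i : ℝ) : ℂ))) := by
      refine Finset.sum_congr rfl fun i _ => ?_
      rw [hinner i, ← hmulsum i]
      ring
    rw [h0, Finset.sum_add_distrib, Finset.sum_add_distrib, Finset.sum_add_distrib]
    have h3 : (∑ i, ((Real.sqrt r * w i : ℝ) : ℂ) * S i)
        = ∑ j, ((Real.sqrt r * Q1s j : ℝ) : ℂ) * b j := by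
      have h31 : (∑ i, ((Real.sqrt r * w i : ℝ) : ℂ) * S i)
          = ∑ j, (∑ i, ((Real.sqrt r * (w i * Qss i j) : ℝ) : ℂ)) * b j := by
        rw [hS]
        simp only [Finset.mul_sum]
        rw [Finset.sum_comm]
        refine Finset.sum_congr rfl fun j _ => ?_
        rw [Finset.sum_mul]
        refine Finset.sum_congr rfl fun i _ => ?_
        push_cast; ring
      rw [h31]
      refine Finset.sum_congr rfl fun j _ => ?_
      congr 1
      have : (∑ i, ((Real.sqrt r * (w i * Qss i j) : ℝ) : ℂ))
          = ((∑ i, Real.sqrt r * (w i * Qss i j) : ℝ) : ℂ) := by push_cast; rfl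
      rw [this]
      congr 1
      have h32 : ∑ i, Real.sqrt r * (w i * Qss i j) = Real.sqrt r * ∑ i, w i * Qss i j := by
        rw [Finset.mul_sum]
      rw [h32]
      congr 1
      exact congrFun hwQ j
    have h4 : (∑ i, ((Real.sqrt r * w i : ℝ) : ℂ) * ((Real.sqrt r * Qs1 i : ℝ) : ℂ))
        = ((r * (Q1s ⬝ᵥ v) : ℝ) : ℂ) := by
      have h41 : (∑ i, ((Real.sqrt r * w i : ℝ) : ℂ) * ((Real.sqrt r * Qs1 i : ℝ) : ℂ))
          = ((∑ i, (Real.sqrt r * w i) * (Real.sqrt r * Qs1 i) : ℝ) : ℂ) := by push_cast; rfl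
      rw [h41]
      congr 1
      have h42 : ∑ i, (Real.sqrt r * w i) * (Real.sqrt r * Qs1 i)
          = (Real.sqrt r * Real.sqrt r) * ∑ i, w i * Qs1 i := by
        rw [Finset.mul_sum]
        exact Finset.sum_congr rfl fun i _ => by ring
      rw [h42, Real.mul_self_sqrt hr]
      have h43 : (∑ i, w i * Qs1 i) = Q1s ⬝ᵥ v := hwv
      rw [h43]
    rw [h3, h4]
    ring
  rw [hRHS]
  push_cast
  try ring





lemma splitA {m : ℕ} (F : (Fin (m+1) → ℝ) → ℂ) (hF : Continuous F) :
    (∫ θ in Set.univ.pi fun _ : Fin (m+1) => Set.Ico (0:ℝ) (2*Real.pi), F θ)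
      = ∫ x in Set.Ico (0:ℝ) (2*Real.pi),
          ∫ y in Set.univ.pi fun _ : Fin m => Set.Ico (0:ℝ) (2*Real.pi), F (Fin.cons x y) := by
  set e := MeasurableEquiv.piFinSuccAbove (fun _ : Fin (m+1) => ℝ) 0 with he
  have hmp : MeasurePreserving e.symm volume volume :=
    (volume_preserving_piFinSuccAbove (fun _ : Fin (m+1) => ℝ) 0).symm e
  have hsymm_eq : ∀ p : ℝ × (Fin m → ℝ), e.symm p = Fin.cons p.1 p.2 := by
    intro p
    rw [he, MeasurableEquiv.piFinSuccAbove_symm_apply]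
    simp [Fin.insertNthEquiv_apply, Fin.insertNth_zero, Fin.consEquiv]
  have hset : e.symm ⁻¹' (Set.univ.pi fun _ : Fin (m+1) => Set.Ico (0:ℝ) (2*Real.pi))
      = (Set.Ico (0:ℝ) (2*Real.pi)) ×ˢ (Set.univ.pi fun _ : Fin m => Set.Ico (0:ℝ) (2*Real.pi)) := by
    ext p
    simp only [Set.mem_preimage, hsymm_eq p, Set.mem_pi, Set.mem_univ, forall_true_left,
      Set.mem_prod, true_implies]
    constructor
    · intro h
      exact ⟨by simpa using h 0, fun j => by simpa using h j.succ⟩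
    · intro ⟨h1, h2⟩ i
      refine Fin.cases ?_ ?_ i
      · simpa using h1
      · intro j; simpa using h2 j
  have hco : Continuous fun p : ℝ × (Fin m → ℝ) => F (Fin.cons p.1 p.2) := by
    apply hF.comp
    apply continuous_pi
    intro i
    refine Fin.cases ?_ ?_ i
    · simp only [Fin.cons_zero]; exact continuous_fst
    · intro j; simp only [Fin.cons_succ]; exact (continuous_apply j).comp continuous_snd
  have hint : IntegrableOn (fun p : ℝ × (Fin m → ℝ) => F (Fin.cons p.1 p.2))
      ((Set.Ico (0:ℝ) (2*Real.pi)) ×ˢ (Set.univ.pi fun _ : Fin m => Set.Ico (0:ℝ) (2*Real.pi)))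
      (volume.prod volume) := by
    have hK : IsCompact ((Set.Icc (0:ℝ) (2*Real.pi)) ×ˢ
        (Set.univ.pi fun _ : Fin m => Set.Icc (0:ℝ) (2*Real.pi))) :=
      isCompact_Icc.prod (isCompact_univ_pi fun _ => isCompact_Icc)
    have h1 : IntegrableOn (fun p : ℝ × (Fin m → ℝ) => F (Fin.cons p.1 p.2))
        ((Set.Icc (0:ℝ) (2*Real.pi)) ×ˢ (Set.univ.pi fun _ : Fin m => Set.Icc (0:ℝ) (2*Real.pi)))
        (volume.prod volume) := by
      rw [show (volume.prod volume : Measure (ℝ × (Fin m → ℝ))) = volume from rfl]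
      exact hco.continuousOn.integrableOn_compact hK
    exact h1.mono_set (Set.prod_mono Set.Ico_subset_Icc_self
      (Set.pi_mono fun i _ => Set.Ico_subset_Icc_self))
  calc (∫ θ in Set.univ.pi fun _ : Fin (m+1) => Set.Ico (0:ℝ) (2*Real.pi), F θ)
      = ∫ p in e.symm ⁻¹' (Set.univ.pi fun _ : Fin (m+1) => Set.Ico (0:ℝ) (2*Real.pi)),
          F (e.symm p) :=
        (hmp.setIntegral_preimage_emb e.symm.measurableEmbedding F _).symm
    _ = ∫ p in (Set.Ico (0:ℝ) (2*Real.pi)) ×ˢ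
          (Set.univ.pi fun _ : Fin m => Set.Ico (0:ℝ) (2*Real.pi)), F (Fin.cons p.1 p.2) := by
        rw [hset]
        refine setIntegral_congr_fun (measurableSet_Ico.prod
          (MeasurableSet.univ_pi fun _ => measurableSet_Ico)) fun p _ => ?_
        rw [hsymm_eq p]
    _ = ∫ x in Set.Ico (0:ℝ) (2*Real.pi),
          ∫ y in Set.univ.pi fun _ : Fin m => Set.Ico (0:ℝ) (2*Real.pi), F (Fin.cons x y) := by
        rw [show (volume : Measure (ℝ × (Fin m → ℝ))) = volume.prod volume from rfl]
        exact setIntegral_prod _ hint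



lemma toCircle_coe_eq (a : ℝ) :
    ((AddCircle.toCircle ((a : ℝ) : AddCircle (2 * Real.pi)) : Circle) : ℂ)
      = Complex.exp (Complex.I * (a : ℂ)) := by
  rw [AddCircle.toCircle_apply_mk]
  rw [show 2 * Real.pi / (2 * Real.pi) * a = a by
    rw [div_self (by positivity : (2 * Real.pi) ≠ 0), one_mul]]
  rw [Circle.coe_exp, mul_comm]

lemma inner_shift {m : ℕ} (coefs : Fin (m+1) → Fin (m+1) → ℂ) (x : ℝ) :
    (∫ y in Set.univ.pi fun _ : Fin m => Set.Ico (0:ℝ) (2*Real.pi),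
      Complex.exp (∑ i, ∑ j, coefs i j * Complex.exp (Complex.I *
        ((((Fin.cons x y : Fin (m+1) → ℝ) i : ℝ) : ℂ) -
         (((Fin.cons x y : Fin (m+1) → ℝ) j : ℝ) : ℂ)))))
    = ∫ y in Set.univ.pi fun _ : Fin m => Set.Ico (0:ℝ) (2*Real.pi),
      Complex.exp (∑ i, ∑ j, coefs i j * Complex.exp (Complex.I *
        ((((Fin.cons x (fun k => y k + x) : Fin (m+1) → ℝ) i : ℝ) : ℂ) -
         (((Fin.cons x (fun k => y k + x) : Fin (m+1) → ℝ) j : ℝ) : ℂ)))) := by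
  set H : (Fin m → AddCircle (2 * Real.pi)) → ℂ := fun u =>
    Complex.exp (∑ i, ∑ j, coefs i j *
      ((AddCircle.toCircle ((Fin.cons ((x : ℝ) : AddCircle (2 * Real.pi)) u
          : Fin (m+1) → AddCircle (2 * Real.pi)) i -
        (Fin.cons ((x : ℝ) : AddCircle (2 * Real.pi)) u
          : Fin (m+1) → AddCircle (2 * Real.pi)) j) : Circle) : ℂ)) with hH
  have hHc : Continuous H := by
    rw [hH]
    apply Complex.continuous_exp.comp
    apply continuous_finset_sum
    intro i _
    apply continuous_finset_sum
    intro j _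
    apply Continuous.mul continuous_const
    have hci : ∀ i : Fin (m+1), Continuous fun u : Fin m → AddCircle (2 * Real.pi) =>
        (Fin.cons ((x : ℝ) : AddCircle (2 * Real.pi)) u : Fin (m+1) → AddCircle (2 * Real.pi)) i := by
      intro i
      refine Fin.cases ?_ ?_ i
      · simp only [Fin.cons_zero]; exact continuous_const
      · intro j; simp only [Fin.cons_succ]; exact continuous_apply j
    exact continuous_subtype_val.comp
      (AddCircle.continuous_toCircle.comp ((hci i).sub (hci j)))
  -- factorization
  have hfact : ∀ (z : Fin (m+1) → ℝ) (u : Fin (m+1) → AddCircle (2 * Real.pi)),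
      (∀ i, u i = ((z i : ℝ) : AddCircle (2 * Real.pi))) → ∀ i j,
      ((AddCircle.toCircle (u i - u j) : Circle) : ℂ)
        = Complex.exp (Complex.I * (((z i : ℝ) : ℂ) - ((z j : ℝ) : ℂ))) := by
    intro z u hu i j
    rw [hu i, hu j]
    rw [show (((z i : ℝ) : AddCircle (2 * Real.pi)) - ((z j : ℝ) : AddCircle (2 * Real.pi)))
        = (((z i - z j : ℝ) : ℝ) : AddCircle (2 * Real.pi)) from
      (QuotientAddGroup.mk_sub _ _ _).symm]
    rw [toCircle_coe_eq]
    push_cast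
    ring_nf
  have h1 : ∀ y : Fin m → ℝ,
      Complex.exp (∑ i, ∑ j, coefs i j * Complex.exp (Complex.I *
        ((((Fin.cons x y : Fin (m+1) → ℝ) i : ℝ) : ℂ) -
         (((Fin.cons x y : Fin (m+1) → ℝ) j : ℝ) : ℂ))))
      = H (fun i => ((y i : ℝ) : AddCircle (2 * Real.pi))) := by
    intro y
    rw [hH]
    congr 1
    refine Finset.sum_congr rfl fun i _ => Finset.sum_congr rfl fun j _ => ?_
    congr 1
    rw [hfact (Fin.cons x y) _ ?_ i j]
    intro k
    refine Fin.cases rfl (fun k' => rfl) k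
  have h2 : ∀ y : Fin m → ℝ,
      Complex.exp (∑ i, ∑ j, coefs i j * Complex.exp (Complex.I *
        ((((Fin.cons x (fun k => y k + x) : Fin (m+1) → ℝ) i : ℝ) : ℂ) -
         (((Fin.cons x (fun k => y k + x) : Fin (m+1) → ℝ) j : ℝ) : ℂ))))
      = H (fun i => ((y i + x : ℝ) : AddCircle (2 * Real.pi))) := by
    intro y
    rw [hH]
    congr 1
    refine Finset.sum_congr rfl fun i _ => Finset.sum_congr rfl fun j _ => ?_
    congr 1
    rw [hfact (Fin.cons x (fun k => y k + x)) _ ?_ i j]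
    intro k
    refine Fin.cases rfl (fun k' => rfl) k
  calc (∫ y in Set.univ.pi fun _ : Fin m => Set.Ico (0:ℝ) (2*Real.pi),
      Complex.exp (∑ i, ∑ j, coefs i j * Complex.exp (Complex.I *
        ((((Fin.cons x y : Fin (m+1) → ℝ) i : ℝ) : ℂ) -
         (((Fin.cons x y : Fin (m+1) → ℝ) j : ℝ) : ℂ)))))
      = ∫ y in Set.univ.pi fun _ : Fin m => Set.Ico (0:ℝ) (2*Real.pi),
          H (fun i => ((y i : ℝ) : AddCircle (2 * Real.pi))) :=
        setIntegral_congr_fun (MeasurableSet.univ_pi fun _ => measurableSet_Ico)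
          fun y _ => h1 y
    _ = ∫ y in Set.univ.pi fun _ : Fin m => Set.Ico (0:ℝ) (2*Real.pi),
          H (fun i => ((y i + x : ℝ) : AddCircle (2 * Real.pi))) := (torus_shift H hHc x).symm
    _ = _ := setIntegral_congr_fun (MeasurableSet.univ_pi fun _ => measurableSet_Ico)
          fun y _ => (h2 y).symm

/-- **Density of a conditioned 1-permanental vector.** Let `G` be an
`(m+1) × (m+1)` real matrix with positive definite symmetric part, `Q := −G⁻¹`, decomposed in
block form over the first index `0` and the remaining indices `1,…,m`: scalar `Q₁₁ = Q 0 0`,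
column `Q_{*1} i = Q i.succ 0`, row `Q_{1*} j = Q 0 j.succ`, block `Q_{**} i j = Q i.succ j.succ`.
Then `Q_{**}` is invertible with `det(−Q_{**}) > 0`, `G₁₁ = det(G)·det(−Q_{**}) > 0`, and for
every `r > 0` and `(l₂,…,lₙ) ∈ ℝ₊ᵐ`, the conditional-density identity
`G₁₁ · e^{r/G₁₁} · ρ(r, l₂,…,lₙ) = (2π)^{−m} det(−Q_{**})
∫_{[0,2π)^m} exp ⟨φ_* + √r·Q_{**}^{−T}Q_{1*}, Q_{**}(φ̄_* + √r·Q_{**}^{−1}Q_{*1})⟩ dθ_*`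
holds, where `φ_{*,i} = √(lᵢ)·e^{𝕚θᵢ}` and `⟨x,y⟩ = Σᵢ xᵢyᵢ` is the unconjugated pairing. -/
theorem conditioned_permanental_density {m : ℕ} (G : Matrix (Fin (m + 1)) (Fin (m + 1)) ℝ)
    (hpd : ∀ x : Fin (m + 1) → ℝ, x ≠ 0 → 0 < x ⬝ᵥ G.mulVec x) :
    let Q : Matrix (Fin (m + 1)) (Fin (m + 1)) ℝ := -G⁻¹
    let Qss : Matrix (Fin m) (Fin m) ℝ := fun i j => Q i.succ j.succ
    let Qs1 : Fin m → ℝ := fun i => Q i.succ 0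
    let Q1s : Fin m → ℝ := fun j => Q 0 j.succ
    IsUnit Qss.det ∧ 0 < (-Qss).det ∧
    G 0 0 = G.det * (-Qss).det ∧ 0 < G 0 0 ∧
    (∀ r : ℝ, 0 < r → ∀ ls : Fin m → ℝ, (∀ i, 0 ≤ ls i) →
      ((G 0 0 : ℝ) : ℂ) * Complex.exp (((r / G 0 0 : ℝ) : ℂ)) *
          permDensity G (Fin.cons r ls) =
        ((((2 * Real.pi)⁻¹ : ℝ) ^ m : ℝ) : ℂ) * (((-Qss).det : ℝ) : ℂ) *
          ∫ θ : Fin m → ℝ in Set.univ.pi fun _ : Fin m => Set.Ico (0 : ℝ) (2 * Real.pi),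
            Complex.exp (∑ i,
              (((Real.sqrt (ls i) : ℝ) : ℂ) * Complex.exp (Complex.I * ((θ i : ℝ) : ℂ)) +
                  ((Real.sqrt r * ((Qss⁻¹)ᵀ.mulVec Q1s i) : ℝ) : ℂ)) *
              ∑ j, ((Qss i j : ℝ) : ℂ) *
                (((Real.sqrt (ls j) : ℝ) : ℂ) * Complex.exp (-(Complex.I * ((θ j : ℝ) : ℂ))) +
                  ((Real.sqrt r * (Qss⁻¹.mulVec Qs1 j) : ℝ) : ℂ)))) := by
  intro Q Qss Qs1 Q1s
  have hGdet : 0 < G.det := pd_det_pos G hpd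
  have hGu : IsUnit G.det := isUnit_iff_ne_zero.2 hGdet.ne'
  have hMpd : ∀ x : Fin (m+1) → ℝ, x ≠ 0 → 0 < x ⬝ᵥ G⁻¹.mulVec x := pd_inv G hpd
  set Mss : Matrix (Fin m) (Fin m) ℝ := Matrix.of fun i j : Fin m => G⁻¹ i.succ j.succ with hMss
  have hMsspd : ∀ x : Fin m → ℝ, x ≠ 0 → 0 < x ⬝ᵥ Mss.mulVec x := by
    intro x hx
    set xt : Fin (m+1) → ℝ := Fin.cons 0 x with hxt
    have hxtne : xt ≠ 0 := by
      intro h0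
      apply hx
      funext i
      have := congrFun h0 i.succ
      simpa [hxt] using this
    have hval : xt ⬝ᵥ G⁻¹.mulVec xt = x ⬝ᵥ Mss.mulVec x := by
      simp [dotProduct, Matrix.mulVec, Fin.sum_univ_succ, hxt, hMss]
    rw [← hval]
    exact hMpd xt hxtne
  have hMssdet : 0 < Mss.det := pd_det_pos _ hMsspd
  have hMssu : IsUnit Mss.det := isUnit_iff_ne_zero.2 hMssdet.ne'
  have hQssneg : -Qss = Mss := by
    funext i j
    simp [hMss, Qss, Q]
    exact neg_neg (G⁻¹ i.succ j.succ)
  have hQssdet : (-Qss).det = Mss.det := by rw [hQssneg]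
  have hQssu : IsUnit Qss.det := by
    have h1 : (-Qss).det = (-1:ℝ)^m * Qss.det := by
      simpa using Matrix.det_neg Qss
    apply isUnit_iff_ne_zero.2
    intro h0
    rw [hQssdet] at h1
    rw [h0, mul_zero] at h1
    exact hMssdet.ne' h1
  have hMdetu : IsUnit (G⁻¹).det := G.isUnit_nonsing_inv_det hGu
  obtain ⟨hdetM, hMinv00⟩ := blockFacts G⁻¹ hMdetu hMssu
  have hGinvinv : G⁻¹⁻¹ = G := Matrix.nonsing_inv_nonsing_inv G hGu
  rw [hGinvinv] at hMinv00
  rw [← hMss] at hdetM hMinv00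
  set δ : ℝ := G⁻¹ 0 0 - (fun j => G⁻¹ 0 j.succ) ⬝ᵥ (Mss⁻¹.mulVec fun i => G⁻¹ i.succ 0) with hδ
  -- δ = c - Q 0 0
  set c : ℝ := Q1s ⬝ᵥ Qss⁻¹.mulVec Qs1 with hc
  have hninv : Mss⁻¹ = -(Qss⁻¹) := by
    rw [← hQssneg]
    apply Matrix.inv_eq_right_inv
    rw [neg_mul_neg, Matrix.mul_nonsing_inv _ hQssu]
  have hδc : δ = c - Q 0 0 := by
    rw [hδ, hninv, hc]
    have h1 : (fun j : Fin m => G⁻¹ 0 j.succ) = -Q1s := by funext j; simp [Q1s, Q]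
    have h2 : (fun i : Fin m => G⁻¹ i.succ 0) = -Qs1 := by funext i; simp [Qs1, Q]
    have h3 : G⁻¹ 0 0 = -Q 0 0 := by simp [Q]
    rw [h1, h2, h3, Matrix.mulVec_neg, Matrix.neg_mulVec, neg_neg, neg_dotProduct]
    ring
  have hG00δ : G 0 0 * δ = 1 := hMinv00
  have hconj3 : G 0 0 = G.det * (-Qss).det := by
    have hdet' : (G⁻¹).det = Mss.det * δ := hdetM
    rw [Matrix.det_nonsing_inv, Ring.inverse_eq_inv] at hdet'
    have key : G 0 0 * G.det⁻¹ = Mss.det := by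
      linear_combination G 0 0 * hdet' + Mss.det * hG00δ
    have h2 := congrArg (fun t => t * G.det) key
    simp only [mul_assoc, inv_mul_cancel₀ hGdet.ne', mul_one] at h2
    rw [hQssdet, h2, mul_comm]
  have hconj4 : 0 < G 0 0 := by
    rw [hconj3, hQssdet]
    exact mul_pos hGdet hMssdet
  refine ⟨hQssu, hQssdet ▸ hMssdet, hconj3, hconj4, ?_⟩
  intro r hr ls hls
  have h2pi : (0:ℝ) < 2 * Real.pi := by positivity
  have hδinv : δ = (G 0 0)⁻¹ := eq_inv_of_mul_eq_one_right hG00δ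
  have hconstEq : (r * (Q1s ⬝ᵥ Qss⁻¹.mulVec Qs1) - r * Q 0 0 : ℝ) = r / G 0 0 := by
    rw [div_eq_mul_inv, ← hδinv, hδc, hc]
    ring
  rw [permDensity]
  set Fb : (Fin (m+1) → ℝ) → ℂ := fun θ => Complex.exp (∑ i, ∑ j,
      ((-(G⁻¹ i j) : ℝ) : ℂ) * ((Real.sqrt ((Fin.cons r ls : Fin (m+1) → ℝ) i *
        (Fin.cons r ls : Fin (m+1) → ℝ) j) : ℝ) : ℂ) *
      Complex.exp (Complex.I * (((θ i : ℝ) : ℂ) - ((θ j : ℝ) : ℂ)))) with hFb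
  set Gb : (Fin m → ℝ) → ℂ := fun θ => Complex.exp (∑ i,
      (((Real.sqrt (ls i) : ℝ) : ℂ) * Complex.exp (Complex.I * ((θ i : ℝ) : ℂ)) +
          ((Real.sqrt r * ((Qss⁻¹)ᵀ.mulVec Q1s i) : ℝ) : ℂ)) *
      ∑ j, ((Qss i j : ℝ) : ℂ) *
        (((Real.sqrt (ls j) : ℝ) : ℂ) * Complex.exp (-(Complex.I * ((θ j : ℝ) : ℂ))) +
          ((Real.sqrt r * (Qss⁻¹.mulVec Qs1 j) : ℝ) : ℂ))) with hGb
  set Ig : ℂ := ∫ θ in Set.univ.pi fun _ : Fin m => Set.Ico (0 : ℝ) (2 * Real.pi), Gb θ with hIg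
  have hfcFb : Continuous Fb := by
    rw [hFb]
    apply Complex.continuous_exp.comp
    apply continuous_finset_sum
    intro i _
    apply continuous_finset_sum
    intro j _
    apply Continuous.mul continuous_const
    apply Complex.continuous_exp.comp
    apply Continuous.mul continuous_const
    exact (Complex.continuous_ofReal.comp (continuous_apply i)).sub
      (Complex.continuous_ofReal.comp (continuous_apply j))
  have hkey : ∀ x : ℝ,
      (∫ y in Set.univ.pi fun _ : Fin m => Set.Ico (0:ℝ) (2*Real.pi), Fb (Fin.cons x y))
        = Complex.exp (-((r / G 0 0 : ℝ) : ℂ)) * Ig := by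
    intro x
    have s1 := inner_shift (fun i j => ((-(G⁻¹ i j) : ℝ) : ℂ) *
      ((Real.sqrt ((Fin.cons r ls : Fin (m+1) → ℝ) i *
        (Fin.cons r ls : Fin (m+1) → ℝ) j) : ℝ) : ℂ)) x
    have s2 : (∫ y in Set.univ.pi fun _ : Fin m => Set.Ico (0:ℝ) (2*Real.pi),
        Complex.exp (∑ i, ∑ j, ((-(G⁻¹ i j) : ℝ) : ℂ) *
          ((Real.sqrt ((Fin.cons r ls : Fin (m+1) → ℝ) i *
            (Fin.cons r ls : Fin (m+1) → ℝ) j) : ℝ) : ℂ) *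
          Complex.exp (Complex.I *
            ((((Fin.cons x (fun k => y k + x) : Fin (m+1) → ℝ) i : ℝ) : ℂ) -
             (((Fin.cons x (fun k => y k + x) : Fin (m+1) → ℝ) j : ℝ) : ℂ)))))
        = ∫ y in Set.univ.pi fun _ : Fin m => Set.Ico (0:ℝ) (2*Real.pi),
            Complex.exp (-((r * (Q1s ⬝ᵥ Qss⁻¹.mulVec Qs1) - r * Q 0 0 : ℝ) : ℂ)) * Gb y := by
      refine setIntegral_congr_fun (MeasurableSet.univ_pi fun _ => measurableSet_Ico)
        fun y _ => ?_
      exact key_exponent Q r hr.le ls hls Qss (fun i j => rfl) hQssu x y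
    have s3 : (∫ y in Set.univ.pi fun _ : Fin m => Set.Ico (0:ℝ) (2*Real.pi),
        Complex.exp (-((r * (Q1s ⬝ᵥ Qss⁻¹.mulVec Qs1) - r * Q 0 0 : ℝ) : ℂ)) * Gb y)
        = Complex.exp (-((r / G 0 0 : ℝ) : ℂ)) * Ig := by
      rw [hconstEq, integral_const_mul, hIg]
    calc (∫ y in Set.univ.pi fun _ : Fin m => Set.Ico (0:ℝ) (2*Real.pi), Fb (Fin.cons x y))
        = ∫ y in Set.univ.pi fun _ : Fin m => Set.Ico (0:ℝ) (2*Real.pi),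
          Complex.exp (∑ i, ∑ j, ((-(G⁻¹ i j) : ℝ) : ℂ) *
            ((Real.sqrt ((Fin.cons r ls : Fin (m+1) → ℝ) i *
              (Fin.cons r ls : Fin (m+1) → ℝ) j) : ℝ) : ℂ) *
            Complex.exp (Complex.I *
              ((((Fin.cons x (fun k => y k + x) : Fin (m+1) → ℝ) i : ℝ) : ℂ) -
               (((Fin.cons x (fun k => y k + x) : Fin (m+1) → ℝ) j : ℝ) : ℂ)))) := s1
      _ = _ := s2.trans s3
  have hIeq : (∫ θ in Set.univ.pi fun _ : Fin (m+1) => Set.Ico (0:ℝ) (2*Real.pi), Fb θ)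
      = ((2 * Real.pi : ℝ) : ℂ) * (Complex.exp (-((r / G 0 0 : ℝ) : ℂ)) * Ig) := by
    rw [splitA Fb hfcFb]
    rw [setIntegral_congr_fun measurableSet_Ico fun x (_ : x ∈ Set.Ico (0:ℝ) (2*Real.pi)) =>
      hkey x]
    rw [setIntegral_const, Real.volume_real_Ico_of_le h2pi.le, sub_zero,
      Complex.real_smul]
  rw [hIeq]
  have hcancel : Complex.exp ((r / G 0 0 : ℝ) : ℂ) * Complex.exp (-((r / G 0 0 : ℝ) : ℂ)) = 1 := by
    rw [← Complex.exp_add, add_neg_cancel, Complex.exp_zero]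
  have hrealconst : (G 0 0) * (((2*Real.pi)⁻¹)^(m+1) * (G.det⁻¹ * (2*Real.pi)))
      = ((2*Real.pi)⁻¹)^m * (-Qss).det := by
    rw [hconj3, pow_succ]
    field_simp
  calc ((G 0 0 : ℝ) : ℂ) * Complex.exp ((r / G 0 0 : ℝ) : ℂ) *
        (((((2 * Real.pi)⁻¹ : ℝ) ^ (m+1) : ℝ) : ℂ) * ((G.det⁻¹ : ℝ) : ℂ) *
          (((2 * Real.pi : ℝ) : ℂ) * (Complex.exp (-((r / G 0 0 : ℝ) : ℂ)) * Ig)))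
      = (((G 0 0 * (((2*Real.pi)⁻¹)^(m+1) * (G.det⁻¹ * (2*Real.pi))) : ℝ) : ℂ)) *
          ((Complex.exp ((r / G 0 0 : ℝ) : ℂ) * Complex.exp (-((r / G 0 0 : ℝ) : ℂ))) * Ig) := by
        push_cast
        ring
    _ = ((((2*Real.pi)⁻¹)^m * (-Qss).det : ℝ) : ℂ) * (1 * Ig) := by
        rw [hrealconst, hcancel]
    _ = ((((2 * Real.pi)⁻¹ : ℝ) ^ m : ℝ) : ℂ) * (((-Qss).det : ℝ) : ℂ) * Ig := by
        push_cast
        ring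
end
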